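/- arXiv:1305.6196 — 2 statements merged into one kernel-verified Lean document; each statement's English description precedes it below -/
import Mathlib

section
/- Let R be a tree on at least two vertices with a distinguished root r whose degree in R is at least 2, and let b > a > 1 be integers. Then TW(T_{a,b}) = TW(T_{a-1,b+1}), where for nonnegative integers s,t the tree T_{s,t} is obtained from R by attaching at r two new vertex-disjoint paths r–u_1–u_2–⋯–u_s and r–v_1–v_2–⋯–v_t. -/
open Finset

/-- The pendent vertices of a graph on a finite vertex type: the vertices of degree 1. -/
noncomputable def pendentFinset {V : Type*} [Fintype V] (G : SimpleGraph V) : Finset V := by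
  classical exact univ.filter (fun v => G.degree v = 1)

/-- The terminal Wiener index of a graph: the sum of the distances over all unordered pairs of
pendent vertices, i.e. half of the sum over all ordered pairs of pendent vertices. -/
noncomputable def terminalWienerIndex {V : Type*} [Fintype V] (G : SimpleGraph V) : ℕ :=
  (∑ u ∈ pendentFinset G, ∑ v ∈ pendentFinset G, G.dist u v) / 2

/-- `T_{s,t}`: the tree obtained from a tree `R` with distinguished root `r` by attaching at
`r` two new vertex-disjoint paths `r–u₁–⋯–u_s` and `r–v₁–⋯–v_t` (the path being empty if
`s = 0`, resp. `t = 0`). -/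
def pathTree {V : Type*} (R : SimpleGraph V) (r : V) (s t : ℕ) :
    SimpleGraph (V ⊕ (Fin s ⊕ Fin t)) :=
  SimpleGraph.fromRel (fun x y =>
    (∃ a b : V, x = Sum.inl a ∧ y = Sum.inl b ∧ R.Adj a b) ∨
    (∃ h : 0 < s, x = Sum.inl r ∧ y = Sum.inr (Sum.inl ⟨0, h⟩)) ∨
    (∃ i j : Fin s, x = Sum.inr (Sum.inl i) ∧ y = Sum.inr (Sum.inl j) ∧ (j : ℕ) = (i : ℕ) + 1) ∨
    (∃ h : 0 < t, x = Sum.inl r ∧ y = Sum.inr (Sum.inr ⟨0, h⟩)) ∨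
    (∃ i j : Fin t, x = Sum.inr (Sum.inr i) ∧ y = Sum.inr (Sum.inr j) ∧ (j : ℕ) = (i : ℕ) + 1))

namespace PTaux

open SimpleGraph

variable {V : Type*} {R : SimpleGraph V} {r : V} {s t : ℕ}

/-- The underlying relation of `pathTree`. -/
def ptRel (R : SimpleGraph V) (r : V) (s t : ℕ) (x y : V ⊕ (Fin s ⊕ Fin t)) : Prop :=
    (∃ a b : V, x = Sum.inl a ∧ y = Sum.inl b ∧ R.Adj a b) ∨
    (∃ h : 0 < s, x = Sum.inl r ∧ y = Sum.inr (Sum.inl ⟨0, h⟩)) ∨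
    (∃ i j : Fin s, x = Sum.inr (Sum.inl i) ∧ y = Sum.inr (Sum.inl j) ∧ (j : ℕ) = (i : ℕ) + 1) ∨
    (∃ h : 0 < t, x = Sum.inl r ∧ y = Sum.inr (Sum.inr ⟨0, h⟩)) ∨
    (∃ i j : Fin t, x = Sum.inr (Sum.inr i) ∧ y = Sum.inr (Sum.inr j) ∧ (j : ℕ) = (i : ℕ) + 1)

lemma pathTree_adj {x y} :
    (pathTree R r s t).Adj x y ↔ x ≠ y ∧ (ptRel R r s t x y ∨ ptRel R r s t y x) := by
  rw [pathTree, SimpleGraph.fromRel_adj]; rfl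

lemma adj_inl {p q : V} (h : R.Adj p q) :
    (pathTree R r s t).Adj (Sum.inl p) (Sum.inl q) := by
  rw [pathTree_adj]
  exact ⟨by simp [h.ne], Or.inl (Or.inl ⟨p, q, rfl, rfl, h⟩)⟩

lemma adj_r_u0 (hs : 0 < s) :
    (pathTree R r s t).Adj (Sum.inl r) (Sum.inr (Sum.inl (⟨0, hs⟩ : Fin s))) := by
  rw [pathTree_adj]
  exact ⟨by simp, Or.inl (Or.inr (Or.inl ⟨hs, rfl, rfl⟩))⟩

lemma adj_r_v0 (ht : 0 < t) :
    (pathTree R r s t).Adj (Sum.inl r) (Sum.inr (Sum.inr (⟨0, ht⟩ : Fin t))) := by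
  rw [pathTree_adj]
  exact ⟨by simp, Or.inl (Or.inr (Or.inr (Or.inr (Or.inl ⟨ht, rfl, rfl⟩))))⟩

lemma adj_uu {i j : Fin s} (h : (j : ℕ) = (i : ℕ) + 1) :
    (pathTree R r s t).Adj (Sum.inr (Sum.inl i)) (Sum.inr (Sum.inl j)) := by
  rw [pathTree_adj]
  refine ⟨by simp [Fin.ext_iff]; omega, Or.inl (Or.inr (Or.inr (Or.inl ⟨i, j, rfl, rfl, h⟩)))⟩

lemma adj_vv {i j : Fin t} (h : (j : ℕ) = (i : ℕ) + 1) :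
    (pathTree R r s t).Adj (Sum.inr (Sum.inr i)) (Sum.inr (Sum.inr j)) := by
  rw [pathTree_adj]
  refine ⟨by simp [Fin.ext_iff]; omega,
    Or.inl (Or.inr (Or.inr (Or.inr (Or.inr ⟨i, j, rfl, rfl, h⟩))))⟩


section lip
variable {W : Type*} {G : SimpleGraph W}

lemma walk_lip (f : W → ℤ) (hf : ∀ x y, G.Adj x y → |f x - f y| ≤ 1) {u v : W}
    (p : G.Walk u v) : |f u - f v| ≤ p.length := by
  induction p with
  | nil => simp
  | @cons a b c h p ih =>
    have h1 := hf _ _ h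
    have h2 : |f a - f c| ≤ |f a - f b| + |f b - f c| := abs_sub_le _ _ _
    simp only [SimpleGraph.Walk.length_cons]
    push_cast
    linarith

lemma lip_le_dist (f : W → ℤ) (hf : ∀ x y, G.Adj x y → |f x - f y| ≤ 1) {u v : W}
    (p : G.Walk u v) : |f u - f v| ≤ (G.dist u v : ℤ) := by
  obtain ⟨q, hq⟩ := p.reachable.exists_walk_length_eq_dist
  rw [← hq]
  exact walk_lip f hf q
end lip

/-- Lipschitz from the underlying relation. -/
lemma lip_of_rel (f : V ⊕ (Fin s ⊕ Fin t) → ℤ)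
    (h : ∀ x y, ptRel R r s t x y → |f x - f y| ≤ 1) :
    ∀ x y, (pathTree R r s t).Adj x y → |f x - f y| ≤ 1 := by
  intro x y hxy
  rw [pathTree_adj] at hxy
  rcases hxy.2 with h' | h'
  · exact h _ _ h'
  · rw [abs_sub_comm]; exact h _ _ h'

/-- The inclusion of `R` into the path tree as a graph homomorphism. -/
def homInl (R : SimpleGraph V) (r : V) (s t : ℕ) : R →g pathTree R r s t where
  toFun := Sum.inl
  map_rel' := fun h => adj_inl h

/-- The path from the root to `u_k`. -/
def uWalk (R : SimpleGraph V) (r : V) (s t : ℕ) :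
    (k : ℕ) → (hk : k < s) → (pathTree R r s t).Walk (Sum.inl r) (Sum.inr (Sum.inl ⟨k, hk⟩))
  | 0, hk => (adj_r_u0 hk).toWalk
  | (k+1), hk =>
      (uWalk R r s t k (Nat.lt_of_succ_lt hk)).concat
        (adj_uu (i := ⟨k, Nat.lt_of_succ_lt hk⟩) (j := ⟨k+1, hk⟩) rfl)

lemma uWalk_length (k : ℕ) (hk : k < s) : (uWalk R r s t k hk).length = k + 1 := by
  induction k with
  | zero => simp [uWalk]
  | succ n ih => simp [uWalk, SimpleGraph.Walk.length_concat, ih]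

/-- The path from the root to `v_k`. -/
def vWalk (R : SimpleGraph V) (r : V) (s t : ℕ) :
    (k : ℕ) → (hk : k < t) → (pathTree R r s t).Walk (Sum.inl r) (Sum.inr (Sum.inr ⟨k, hk⟩))
  | 0, hk => (adj_r_v0 hk).toWalk
  | (k+1), hk =>
      (vWalk R r s t k (Nat.lt_of_succ_lt hk)).concat
        (adj_vv (i := ⟨k, Nat.lt_of_succ_lt hk⟩) (j := ⟨k+1, hk⟩) rfl)

lemma vWalk_length (k : ℕ) (hk : k < t) : (vWalk R r s t k hk).length = k + 1 := by
  induction k with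
  | zero => simp [vWalk]
  | succ n ih => simp [vWalk, SimpleGraph.Walk.length_concat, ih]


/-- Potential function measuring distance to `Sum.inl q`. -/
noncomputable def pot (R : SimpleGraph V) (r : V) (s t : ℕ) (q : V) : V ⊕ (Fin s ⊕ Fin t) → ℤ
  | Sum.inl w => R.dist w q
  | Sum.inr (Sum.inl i) => R.dist r q + (i : ℕ) + 1
  | Sum.inr (Sum.inr j) => R.dist r q + (j : ℕ) + 1

lemma pot_lip (hc : R.Connected) (q : V) :
    ∀ x y, (pathTree R r s t).Adj x y → |pot R r s t q x - pot R r s t q y| ≤ 1 := by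
  apply lip_of_rel
  intro x y hrel
  rcases hrel with ⟨a, b, rfl, rfl, hab⟩ | ⟨hs', rfl, rfl⟩ | ⟨i, j, rfl, rfl, hij⟩ |
    ⟨ht', rfl, rfl⟩ | ⟨i, j, rfl, rfl, hij⟩
  · have h1 : R.dist a q ≤ R.dist a b + R.dist b q := hc.dist_triangle
    have h2 : R.dist b q ≤ R.dist b a + R.dist a q := hc.dist_triangle
    have h3 : R.dist a b = 1 := SimpleGraph.dist_eq_one_iff_adj.2 hab
    have h4 : R.dist b a = 1 := SimpleGraph.dist_eq_one_iff_adj.2 hab.symm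
    simp only [pot]
    rw [abs_sub_le_iff]
    omega
  · simp only [pot, Fin.val_mk]
    rw [abs_sub_le_iff]; omega
  · simp only [pot]
    rw [abs_sub_le_iff]; omega
  · simp only [pot, Fin.val_mk]
    rw [abs_sub_le_iff]; omega
  · simp only [pot]
    rw [abs_sub_le_iff]; omega

lemma dist_inl_inl (hc : R.Connected) (p q : V) :
    (pathTree R r s t).dist (Sum.inl p) (Sum.inl q) = R.dist p q := by
  obtain ⟨w, hw⟩ := hc.exists_walk_length_eq_dist p q
  have w' : (pathTree R r s t).Walk (Sum.inl p) (Sum.inl q) := w.map (homInl R r s t)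
  have hup : (pathTree R r s t).dist (Sum.inl p) (Sum.inl q) ≤ R.dist p q := by
    have := SimpleGraph.dist_le (w.map (homInl R r s t))
    rwa [SimpleGraph.Walk.length_map, hw] at this
  have hlo := lip_le_dist (pot R r s t q) (pot_lip hc q) w'
  simp only [pot] at hlo
  rw [abs_le] at hlo
  have h0 : R.dist q q = 0 := SimpleGraph.dist_self
  omega

lemma dist_inl_u (hc : R.Connected) (p : V) (k : ℕ) (hk : k < s) :
    (pathTree R r s t).dist (Sum.inl p) (Sum.inr (Sum.inl ⟨k, hk⟩)) = R.dist p r + k + 1 := by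
  obtain ⟨w, hw⟩ := hc.exists_walk_length_eq_dist p r
  have w' : (pathTree R r s t).Walk (Sum.inl p) (Sum.inr (Sum.inl ⟨k, hk⟩)) :=
    (w.map (homInl R r s t)).append (uWalk R r s t k hk)
  have hup : (pathTree R r s t).dist (Sum.inl p) (Sum.inr (Sum.inl ⟨k, hk⟩))
      ≤ R.dist p r + k + 1 := by
    have := SimpleGraph.dist_le ((w.map (homInl R r s t)).append (uWalk R r s t k hk))
    rw [SimpleGraph.Walk.length_append (w.map (homInl R r s t)) (uWalk R r s t k hk),
        SimpleGraph.Walk.length_map, hw] at this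
    erw [uWalk_length] at this
    rwa [← add_assoc] at this
  have hlo := lip_le_dist (pot R r s t p) (pot_lip hc p) w'
  simp only [pot, Fin.val_mk] at hlo
  rw [abs_le] at hlo
  have h0 : R.dist p p = 0 := SimpleGraph.dist_self
  have h1 : R.dist r p = R.dist p r := SimpleGraph.dist_comm
  omega

lemma dist_inl_v (hc : R.Connected) (p : V) (k : ℕ) (hk : k < t) :
    (pathTree R r s t).dist (Sum.inl p) (Sum.inr (Sum.inr ⟨k, hk⟩)) = R.dist p r + k + 1 := by
  obtain ⟨w, hw⟩ := hc.exists_walk_length_eq_dist p r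
  have w' : (pathTree R r s t).Walk (Sum.inl p) (Sum.inr (Sum.inr ⟨k, hk⟩)) :=
    (w.map (homInl R r s t)).append (vWalk R r s t k hk)
  have hup : (pathTree R r s t).dist (Sum.inl p) (Sum.inr (Sum.inr ⟨k, hk⟩))
      ≤ R.dist p r + k + 1 := by
    have := SimpleGraph.dist_le ((w.map (homInl R r s t)).append (vWalk R r s t k hk))
    rw [SimpleGraph.Walk.length_append (w.map (homInl R r s t)) (vWalk R r s t k hk),
        SimpleGraph.Walk.length_map, hw] at this
    erw [vWalk_length] at this
    rwa [← add_assoc] at this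
  have hlo := lip_le_dist (pot R r s t p) (pot_lip hc p) w'
  simp only [pot, Fin.val_mk] at hlo
  rw [abs_le] at hlo
  have h0 : R.dist p p = 0 := SimpleGraph.dist_self
  have h1 : R.dist r p = R.dist p r := SimpleGraph.dist_comm
  omega

/-- Potential separating the two attached paths. -/
def pot2 (R : SimpleGraph V) (r : V) (s t : ℕ) : V ⊕ (Fin s ⊕ Fin t) → ℤ
  | Sum.inl _ => 0
  | Sum.inr (Sum.inl i) => (i : ℕ) + 1
  | Sum.inr (Sum.inr j) => -((j : ℕ) + 1)

lemma pot2_lip :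
    ∀ x y, (pathTree R r s t).Adj x y → |pot2 R r s t x - pot2 R r s t y| ≤ 1 := by
  apply lip_of_rel
  intro x y hrel
  rcases hrel with ⟨a, b, rfl, rfl, hab⟩ | ⟨hs', rfl, rfl⟩ | ⟨i, j, rfl, rfl, hij⟩ |
    ⟨ht', rfl, rfl⟩ | ⟨i, j, rfl, rfl, hij⟩ <;>
    simp only [pot2, Fin.val_mk] <;> (rw [abs_sub_le_iff]; omega)

lemma dist_u_v (k : ℕ) (hk : k < s) (l : ℕ) (hl : l < t) :
    (pathTree R r s t).dist (Sum.inr (Sum.inl ⟨k, hk⟩)) (Sum.inr (Sum.inr ⟨l, hl⟩))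
      = k + l + 2 := by
  have w' : (pathTree R r s t).Walk (Sum.inr (Sum.inl ⟨k, hk⟩)) (Sum.inr (Sum.inr ⟨l, hl⟩)) :=
    (uWalk R r s t k hk).reverse.append (vWalk R r s t l hl)
  have hup : (pathTree R r s t).dist (Sum.inr (Sum.inl ⟨k, hk⟩)) (Sum.inr (Sum.inr ⟨l, hl⟩))
      ≤ k + l + 2 := by
    have := SimpleGraph.dist_le ((uWalk R r s t k hk).reverse.append (vWalk R r s t l hl))
    rwa [SimpleGraph.Walk.length_append, SimpleGraph.Walk.length_reverse, uWalk_length,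
      vWalk_length, show k + 1 + (l + 1) = k + l + 2 by omega] at this
  have hlo := lip_le_dist (pot2 R r s t) (pot2_lip) w'
  simp only [pot2, Fin.val_mk] at hlo
  rw [abs_le] at hlo
  omega


lemma adj_inl_iff {p : V} (hp : p ≠ r) (x) :
    (pathTree R r s t).Adj (Sum.inl p) x ↔ ∃ q, x = Sum.inl q ∧ R.Adj p q := by
  rw [pathTree_adj]
  constructor
  · rintro ⟨hne, h | h⟩
    · rcases h with ⟨a, b, ha, rfl, hab⟩ | ⟨hs', ha, rfl⟩ | ⟨i, j, ha, rfl, hij⟩ |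
        ⟨ht', ha, rfl⟩ | ⟨i, j, ha, rfl, hij⟩
      · cases ha; exact ⟨b, rfl, hab⟩
      · exact absurd (Sum.inl.inj ha) hp
      · cases ha
      · exact absurd (Sum.inl.inj ha) hp
      · cases ha
    · rcases h with ⟨a, b, rfl, hb, hab⟩ | ⟨hs', rfl, hb⟩ | ⟨i, j, rfl, hb, hij⟩ |
        ⟨ht', rfl, hb⟩ | ⟨i, j, rfl, hb, hij⟩
      · cases hb; exact ⟨a, rfl, hab.symm⟩
      · cases hb
      · cases hb
      · cases hb
      · cases hb
  · rintro ⟨q, rfl, h⟩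
    exact adj_inl h

lemma adj_uu_iff (i : Fin s) (x) :
    (pathTree R r s t).Adj (Sum.inr (Sum.inl i)) x ↔
      ((i : ℕ) = 0 ∧ x = Sum.inl r) ∨
      ∃ j : Fin s, x = Sum.inr (Sum.inl j) ∧
        ((j : ℕ) = (i : ℕ) + 1 ∨ (i : ℕ) = (j : ℕ) + 1) := by
  rw [pathTree_adj]
  constructor
  · rintro ⟨hne, h | h⟩
    · rcases h with ⟨a, b, ha, rfl, hab⟩ | ⟨hs', ha, rfl⟩ | ⟨i', j, ha, rfl, hij⟩ |
        ⟨ht', ha, rfl⟩ | ⟨i', j, ha, rfl, hij⟩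
      · cases ha
      · cases ha
      · obtain rfl := Sum.inl.inj (Sum.inr.inj ha)
        exact Or.inr ⟨j, rfl, Or.inl hij⟩
      · cases ha
      · cases ha
    · rcases h with ⟨a, b, rfl, hb, hab⟩ | ⟨hs', rfl, hb⟩ | ⟨i', j, rfl, hb, hij⟩ |
        ⟨ht', rfl, hb⟩ | ⟨i', j, rfl, hb, hij⟩
      · cases hb
      · obtain rfl := Sum.inl.inj (Sum.inr.inj hb)
        exact Or.inl ⟨rfl, rfl⟩
      · obtain rfl := Sum.inl.inj (Sum.inr.inj hb)
        exact Or.inr ⟨i', rfl, Or.inr hij⟩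
      · cases hb
      · cases hb
  · rintro (⟨hi, rfl⟩ | ⟨j, rfl, hj | hj⟩)
    · obtain ⟨iv, hilt⟩ := i
      simp only [Fin.val_mk] at hi
      subst hi
      exact (adj_r_u0 hilt).symm
    · exact adj_uu hj
    · exact (adj_uu hj).symm

lemma adj_vv_iff (i : Fin t) (x) :
    (pathTree R r s t).Adj (Sum.inr (Sum.inr i)) x ↔
      ((i : ℕ) = 0 ∧ x = Sum.inl r) ∨
      ∃ j : Fin t, x = Sum.inr (Sum.inr j) ∧
        ((j : ℕ) = (i : ℕ) + 1 ∨ (i : ℕ) = (j : ℕ) + 1) := by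
  rw [pathTree_adj]
  constructor
  · rintro ⟨hne, h | h⟩
    · rcases h with ⟨a, b, ha, rfl, hab⟩ | ⟨hs', ha, rfl⟩ | ⟨i', j, ha, rfl, hij⟩ |
        ⟨ht', ha, rfl⟩ | ⟨i', j, ha, rfl, hij⟩
      · cases ha
      · cases ha
      · cases ha
      · cases ha
      · obtain rfl := Sum.inr.inj (Sum.inr.inj ha)
        exact Or.inr ⟨j, rfl, Or.inl hij⟩
    · rcases h with ⟨a, b, rfl, hb, hab⟩ | ⟨hs', rfl, hb⟩ | ⟨i', j, rfl, hb, hij⟩ |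
        ⟨ht', rfl, hb⟩ | ⟨i', j, rfl, hb, hij⟩
      · cases hb
      · cases hb
      · cases hb
      · obtain rfl := Sum.inr.inj (Sum.inr.inj hb)
        exact Or.inl ⟨rfl, rfl⟩
      · obtain rfl := Sum.inr.inj (Sum.inr.inj hb)
        exact Or.inr ⟨i', rfl, Or.inr hij⟩
  · rintro (⟨hi, rfl⟩ | ⟨j, rfl, hj | hj⟩)
    · obtain ⟨iv, hilt⟩ := i
      simp only [Fin.val_mk] at hi
      subst hi
      exact (adj_r_v0 hilt).symm
    · exact adj_vv hj
    · exact (adj_vv hj).symm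


lemma degree_eq_ncard {W : Type*} (G : SimpleGraph W) (x : W)
    [Fintype (G.neighborSet x)] : G.degree x = (G.neighborSet x).ncard := by
  rw [← SimpleGraph.card_neighborSet_eq_degree, ← Nat.card_eq_fintype_card,
    Nat.card_coe_set_eq]

lemma two_le_ncard {α : Type*} [Fintype α] {S : Set α} {y z : α}
    (hy : y ∈ S) (hz : z ∈ S) (hne : y ≠ z) : 2 ≤ S.ncard := by
  have h : ({y, z} : Set α).ncard ≤ S.ncard :=
    Set.ncard_le_ncard (by simp [Set.insert_subset_iff, hy, hz]) (Set.toFinite S)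
  rwa [Set.ncard_pair hne] at h

lemma ncard_nbhd_inl {p : V} (hp : p ≠ r) :
    ((pathTree R r s t).neighborSet (Sum.inl p)).ncard = (R.neighborSet p).ncard := by
  have h : (pathTree R r s t).neighborSet (Sum.inl p) = Sum.inl '' R.neighborSet p := by
    ext y
    simp only [SimpleGraph.mem_neighborSet, Set.mem_image]
    rw [adj_inl_iff hp]
    constructor
    · rintro ⟨q, rfl, h⟩; exact ⟨q, h, rfl⟩
    · rintro ⟨q, h, rfl⟩; exact ⟨q, rfl, h⟩
  rw [h, Set.ncard_image_of_injective _ Sum.inl_injective]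

lemma ncard_nbhd_r [Fintype V] (hs : 0 < s) (ht : 0 < t) :
    2 ≤ ((pathTree R r s t).neighborSet (Sum.inl r)).ncard :=
  two_le_ncard (adj_r_u0 hs) (adj_r_v0 ht) (by simp)

lemma ncard_nbhd_uu_last [Fintype V] (i : Fin s) (h : (i : ℕ) + 1 = s) :
    ((pathTree R r s t).neighborSet (Sum.inr (Sum.inl i))).ncard = 1 := by
  rcases Nat.eq_zero_or_pos (i : ℕ) with h0 | h0
  · have : (pathTree R r s t).neighborSet (Sum.inr (Sum.inl i)) = {Sum.inl r} := by
      ext y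
      simp only [SimpleGraph.mem_neighborSet, Set.mem_singleton_iff]
      rw [adj_uu_iff]
      constructor
      · rintro (⟨_, rfl⟩ | ⟨j, rfl, hj | hj⟩)
        · rfl
        · omega
        · omega
      · rintro rfl; exact Or.inl ⟨h0, rfl⟩
    rw [this, Set.ncard_singleton]
  · have hlt : (i : ℕ) - 1 < s := by omega
    have : (pathTree R r s t).neighborSet (Sum.inr (Sum.inl i))
        = {Sum.inr (Sum.inl ⟨(i : ℕ) - 1, hlt⟩)} := by
      ext y
      simp only [SimpleGraph.mem_neighborSet, Set.mem_singleton_iff]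
      rw [adj_uu_iff]
      constructor
      · rintro (⟨h', rfl⟩ | ⟨j, rfl, hj | hj⟩)
        · omega
        · exact absurd hj (by omega)
        · congr 2
          exact Fin.ext (by simp only [Fin.val_mk]; omega)
      · rintro rfl
        exact Or.inr ⟨_, rfl, Or.inr (by simp only [Fin.val_mk]; omega)⟩
    rw [this, Set.ncard_singleton]

lemma ncard_nbhd_uu_mid [Fintype V] (i : Fin s) (h : (i : ℕ) + 1 < s) :
    2 ≤ ((pathTree R r s t).neighborSet (Sum.inr (Sum.inl i))).ncard := by
  rcases Nat.eq_zero_or_pos (i : ℕ) with h0 | h0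
  · exact two_le_ncard (S := (pathTree R r s t).neighborSet (Sum.inr (Sum.inl i)))
      ((adj_uu_iff i _).2 (Or.inl ⟨h0, rfl⟩))
      ((adj_uu_iff i _).2 (Or.inr ⟨⟨(i : ℕ) + 1, h⟩, rfl, Or.inl rfl⟩)) (by simp)
  · have hlt : (i : ℕ) - 1 < s := by omega
    exact two_le_ncard (S := (pathTree R r s t).neighborSet (Sum.inr (Sum.inl i)))
      ((adj_uu_iff i _).2 (Or.inr ⟨⟨(i : ℕ) - 1, hlt⟩, rfl, Or.inr (by simp only [Fin.val_mk]; omega)⟩))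
      ((adj_uu_iff i _).2 (Or.inr ⟨⟨(i : ℕ) + 1, h⟩, rfl, Or.inl rfl⟩))
      (by simp only [ne_eq, Sum.inr.injEq, Sum.inl.injEq, Fin.mk.injEq]; omega)

lemma ncard_nbhd_vv_last [Fintype V] (i : Fin t) (h : (i : ℕ) + 1 = t) :
    ((pathTree R r s t).neighborSet (Sum.inr (Sum.inr i))).ncard = 1 := by
  rcases Nat.eq_zero_or_pos (i : ℕ) with h0 | h0
  · have : (pathTree R r s t).neighborSet (Sum.inr (Sum.inr i)) = {Sum.inl r} := by
      ext y
      simp only [SimpleGraph.mem_neighborSet, Set.mem_singleton_iff]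
      rw [adj_vv_iff]
      constructor
      · rintro (⟨_, rfl⟩ | ⟨j, rfl, hj | hj⟩)
        · rfl
        · omega
        · omega
      · rintro rfl; exact Or.inl ⟨h0, rfl⟩
    rw [this, Set.ncard_singleton]
  · have hlt : (i : ℕ) - 1 < t := by omega
    have : (pathTree R r s t).neighborSet (Sum.inr (Sum.inr i))
        = {Sum.inr (Sum.inr ⟨(i : ℕ) - 1, hlt⟩)} := by
      ext y
      simp only [SimpleGraph.mem_neighborSet, Set.mem_singleton_iff]
      rw [adj_vv_iff]
      constructor
      · rintro (⟨h', rfl⟩ | ⟨j, rfl, hj | hj⟩)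
        · omega
        · exact absurd hj (by omega)
        · congr 2
          exact Fin.ext (by simp only [Fin.val_mk]; omega)
      · rintro rfl
        exact Or.inr ⟨_, rfl, Or.inr (by simp only [Fin.val_mk]; omega)⟩
    rw [this, Set.ncard_singleton]

lemma ncard_nbhd_vv_mid [Fintype V] (i : Fin t) (h : (i : ℕ) + 1 < t) :
    2 ≤ ((pathTree R r s t).neighborSet (Sum.inr (Sum.inr i))).ncard := by
  rcases Nat.eq_zero_or_pos (i : ℕ) with h0 | h0
  · exact two_le_ncard (S := (pathTree R r s t).neighborSet (Sum.inr (Sum.inr i)))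
      ((adj_vv_iff i _).2 (Or.inl ⟨h0, rfl⟩))
      ((adj_vv_iff i _).2 (Or.inr ⟨⟨(i : ℕ) + 1, h⟩, rfl, Or.inl rfl⟩)) (by simp)
  · have hlt : (i : ℕ) - 1 < t := by omega
    exact two_le_ncard (S := (pathTree R r s t).neighborSet (Sum.inr (Sum.inr i)))
      ((adj_vv_iff i _).2 (Or.inr ⟨⟨(i : ℕ) - 1, hlt⟩, rfl, Or.inr (by simp only [Fin.val_mk]; omega)⟩))
      ((adj_vv_iff i _).2 (Or.inr ⟨⟨(i : ℕ) + 1, h⟩, rfl, Or.inl rfl⟩))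
      (by simp only [ne_eq, Sum.inr.injEq, Sum.inr.injEq, Fin.mk.injEq]; omega)


lemma pendentFinset_eq [Fintype V] [DecidableEq V] [DecidableRel R.Adj] (hs : 0 < s) (ht : 0 < t)
    (hdeg : 2 ≤ R.degree r) :
    pendentFinset (pathTree R r s t) =
      insert (Sum.inr (Sum.inl (⟨s - 1, by omega⟩ : Fin s)))
        (insert (Sum.inr (Sum.inr (⟨t - 1, by omega⟩ : Fin t)))
          ((Finset.univ.filter fun p => R.degree p = 1).image Sum.inl)) := by
  have hdeg' : 2 ≤ (R.neighborSet r).ncard := by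
    rw [← degree_eq_ncard]; exact hdeg
  ext x
  simp only [pendentFinset, Finset.mem_filter, Finset.mem_univ, true_and, Finset.mem_insert,
    Finset.mem_image]
  rw [degree_eq_ncard]
  rcases x with p | i | i
  · by_cases hp : p = r
    · subst hp
      have h2 := ncard_nbhd_r (R := R) (r := p) hs ht
      constructor
      · intro h; omega
      · rintro (h | h | ⟨a, ha, h⟩)
        · cases h
        · cases h
        · obtain rfl := Sum.inl.inj h
          rw [degree_eq_ncard] at ha
          omega
    · rw [ncard_nbhd_inl hp]
      constructor
      · intro h
        refine Or.inr (Or.inr ⟨p, ?_, rfl⟩)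
        rw [degree_eq_ncard]; exact h
      · rintro (h | h | ⟨a, ha, h⟩)
        · cases h
        · cases h
        · obtain rfl := Sum.inl.inj h
          rw [degree_eq_ncard] at ha; exact ha
  · constructor
    · intro h
      rcases Nat.lt_or_ge ((i : ℕ) + 1) s with hlt | hge
      · have := ncard_nbhd_uu_mid (R := R) (r := r) (t := t) i hlt; omega
      · have hi : i = (⟨s - 1, by omega⟩ : Fin s) :=
          Fin.ext (by have := i.2; simp only [Fin.val_mk]; omega)
        exact Or.inl (by rw [hi])
    · rintro (h | h | ⟨a, ha, h⟩)
      · obtain rfl := Sum.inl.inj (Sum.inr.inj h)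
        refine ncard_nbhd_uu_last _ ?_
        simp only [Fin.val_mk]; omega
      · cases h
      · cases h
  · constructor
    · intro h
      rcases Nat.lt_or_ge ((i : ℕ) + 1) t with hlt | hge
      · have := ncard_nbhd_vv_mid (R := R) (r := r) (s := s) i hlt; omega
      · have hi : i = (⟨t - 1, by omega⟩ : Fin t) :=
          Fin.ext (by have := i.2; simp only [Fin.val_mk]; omega)
        exact Or.inr (Or.inl (by rw [hi]))
    · rintro (h | h | ⟨a, ha, h⟩)
      · cases h
      · obtain rfl := Sum.inr.inj (Sum.inr.inj h)
        refine ncard_nbhd_vv_last _ ?_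
        simp only [Fin.val_mk]; omega
      · cases h

lemma key [Fintype V] [DecidableRel R.Adj] (hc : R.Connected) (hdeg : 2 ≤ R.degree r)
    (hs : 0 < s) (ht : 0 < t) :
    (∑ x ∈ pendentFinset (pathTree R r s t), ∑ y ∈ pendentFinset (pathTree R r s t),
        (pathTree R r s t).dist x y)
      = (∑ p ∈ Finset.univ.filter (fun p => R.degree p = 1),
            ∑ q ∈ Finset.univ.filter (fun p => R.degree p = 1), R.dist p q)
        + 4 * (∑ p ∈ Finset.univ.filter (fun p => R.degree p = 1), R.dist p r)
        + (2 * (Finset.univ.filter (fun p => R.degree p = 1)).card + 2) * (s + t) := by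
  classical
  set L := Finset.univ.filter (fun p => R.degree p = 1) with hL
  set G := pathTree R r s t with hG
  set uL : V ⊕ (Fin s ⊕ Fin t) := Sum.inr (Sum.inl (⟨s - 1, by omega⟩ : Fin s)) with huL
  set vL : V ⊕ (Fin s ⊕ Fin t) := Sum.inr (Sum.inr (⟨t - 1, by omega⟩ : Fin t)) with hvL
  have hpend : pendentFinset G = insert uL (insert vL (L.image Sum.inl)) :=
    pendentFinset_eq hs ht hdeg
  have huv : uL ≠ vL := by simp [huL, hvL]
  have hvM : vL ∉ L.image Sum.inl := by simp [hvL]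
  have huM : uL ∉ insert vL (L.image Sum.inl) := by simp [huL, hvL]
  have d1 : ∀ p : V, G.dist (Sum.inl p) uL = R.dist p r + s :=
    fun p => (dist_inl_u hc p (s-1) (by omega)).trans (by omega)
  have d1' : ∀ p : V, G.dist uL (Sum.inl p) = R.dist p r + s :=
    fun p => (SimpleGraph.dist_comm).trans (d1 p)
  have d2 : ∀ p : V, G.dist (Sum.inl p) vL = R.dist p r + t :=
    fun p => (dist_inl_v hc p (t-1) (by omega)).trans (by omega)
  have d2' : ∀ p : V, G.dist vL (Sum.inl p) = R.dist p r + t :=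
    fun p => (SimpleGraph.dist_comm).trans (d2 p)
  have duv : G.dist uL vL = s + t :=
    (dist_u_v (s-1) (by omega) (t-1) (by omega)).trans (by omega)
  have dvu : G.dist vL uL = s + t := (SimpleGraph.dist_comm).trans duv
  have duu : G.dist uL uL = 0 := SimpleGraph.dist_self
  have dvv : G.dist vL vL = 0 := SimpleGraph.dist_self
  have dpq : ∀ p q : V, G.dist (Sum.inl p) (Sum.inl q) = R.dist p q :=
    fun p q => dist_inl_inl hc p q
  have hinj : ∀ x ∈ L, ∀ y ∈ L,
      (Sum.inl x : V ⊕ (Fin s ⊕ Fin t)) = Sum.inl y → x = y :=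
    fun x _ y _ h => Sum.inl.inj h
  rw [hpend]
  rw [Finset.sum_insert huM, Finset.sum_insert hvM,
    Finset.sum_insert huM, Finset.sum_insert hvM,
    Finset.sum_image hinj]
  simp only [Finset.sum_insert huM, Finset.sum_insert hvM, Finset.sum_image hinj]
  simp only [d1, d1', d2, d2', duv, dvu, duu, dvv, dpq]
  simp only [Finset.sum_add_distrib, Finset.sum_const, smul_eq_mul]
  ring

end PTaux

/-- Let `R` be a tree on at least two vertices whose root `r` has degree at least `2`, and let
`b > a > 1`. Then `TW(T_{a,b}) = TW(T_{a-1,b+1})`. -/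
theorem terminal_wiener_index_pathTree_eq {V : Type*} [Fintype V] (R : SimpleGraph V)
    [DecidableRel R.Adj] (r : V) (hR : R.IsTree) (hcard : 2 ≤ Fintype.card V)
    (hdeg : 2 ≤ R.degree r) (a b : ℕ) (ha : 1 < a) (hab : a < b) :
    terminalWienerIndex (pathTree R r a b) = terminalWienerIndex (pathTree R r (a - 1) (b + 1)) := by
  have hc : R.Connected := hR.isConnected
  unfold terminalWienerIndex
  rw [PTaux.key hc hdeg (by omega) (by omega), PTaux.key hc hdeg (by omega) (by omega)]
  have h : a - 1 + (b + 1) = a + b := by omega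
  rw [h]
end

section
/- Let R be a tree on at least two vertices with a distinguished root r whose degree in R is at least 2, and let b > 1 be an integer. Then TW(T_{1,b}) > TW(T_{0,b+1}), where for nonnegative integers s,t the tree T_{s,t} is obtained from R by attaching at r two new vertex-disjoint paths r–u_1–u_2–⋯–u_s and r–v_1–v_2–⋯–v_t. -/
open Finset

section Aux


variable {V : Type*} (R : SimpleGraph V) (r : V) (s t : ℕ)

/-- The embedding of `R` into `pathTree R r s t`. -/
def ptHom : R →g pathTree R r s t where
  toFun := Sum.inl
  map_rel' := fun {a b} h => by
    refine ⟨by simp [h.ne], Or.inl (Or.inl ⟨a, b, rfl, rfl, h⟩)⟩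

variable {R r s t}

lemma pt_adj_inl_inl {a c : V} (h : R.Adj a c) :
    (pathTree R r s t).Adj (Sum.inl a) (Sum.inl c) := (ptHom R r s t).map_rel h

lemma pt_adj_v_start (h : 0 < t) :
    (pathTree R r s t).Adj (Sum.inl r) (Sum.inr (Sum.inr ⟨0, h⟩)) := by
  refine ⟨by simp, Or.inl (Or.inr <| Or.inr <| Or.inr <| Or.inl ⟨h, rfl, rfl⟩)⟩

lemma pt_adj_u_start (h : 0 < s) :
    (pathTree R r s t).Adj (Sum.inl r) (Sum.inr (Sum.inl ⟨0, h⟩)) := by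
  refine ⟨by simp, Or.inl (Or.inr <| Or.inl ⟨h, rfl, rfl⟩)⟩

lemma pt_adj_v_chain {i j : Fin t} (h : (j : ℕ) = (i : ℕ) + 1) :
    (pathTree R r s t).Adj (Sum.inr (Sum.inr i)) (Sum.inr (Sum.inr j)) := by
  refine ⟨by simp [Fin.ext_iff]; omega, Or.inl (Or.inr <| Or.inr <| Or.inr <| Or.inr ⟨i, j, rfl, rfl, h⟩)⟩

end Aux

section Walks

variable {V : Type*} {R : SimpleGraph V} {r : V} {s t : ℕ}

lemma exists_vwalk : ∀ (i : ℕ) (h : i < t),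
    ∃ p : (pathTree R r s t).Walk (Sum.inl r) (Sum.inr (Sum.inr ⟨i, h⟩)), p.length = i + 1 := by
  intro i
  induction i with
  | zero => exact fun h => ⟨(pt_adj_v_start h).toWalk, rfl⟩
  | succ i ih =>
      intro h
      obtain ⟨p, hp⟩ := ih (Nat.lt_of_succ_lt h)
      exact ⟨p.concat (pt_adj_v_chain rfl), by simp [SimpleGraph.Walk.length_concat, hp]⟩

/-- Lipschitz potential bound on walk lengths. -/
lemma lipschitz_walk {W : Type*} {G : SimpleGraph W} (f : W → ℤ)
    (hf : ∀ x y, G.Adj x y → |f x - f y| ≤ 1) :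
    ∀ {x y : W} (p : G.Walk x y), |f x - f y| ≤ p.length := by
  intro x y p
  induction p with
  | nil => simp
  | cons h p ih =>
      calc |f _ - f _| ≤ |f _ - f _| + |f _ - f _| := abs_sub_le _ _ _
        _ ≤ 1 + p.length := add_le_add (hf _ _ h) ih
        _ = _ := by push_cast [SimpleGraph.Walk.length_cons]; ring

lemma lipschitz_dist {W : Type*} {G : SimpleGraph W} (f : W → ℤ)
    (hf : ∀ x y, G.Adj x y → |f x - f y| ≤ 1) {x y : W} (h : G.Reachable x y) :
    |f x - f y| ≤ G.dist x y := by
  obtain ⟨p, hp⟩ := h.exists_walk_length_eq_dist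
  exact hp ▸ lipschitz_walk f hf p

end Walks

section Lip

variable {V : Type*} {R : SimpleGraph V} {r : V} {s t : ℕ}

lemma pt_lip {f : V ⊕ (Fin s ⊕ Fin t) → ℤ}
    (h1 : ∀ a b, R.Adj a b → |f (Sum.inl a) - f (Sum.inl b)| ≤ 1)
    (h2 : ∀ h : 0 < s, |f (Sum.inl r) - f (Sum.inr (Sum.inl ⟨0, h⟩))| ≤ 1)
    (h3 : ∀ i j : Fin s, (j : ℕ) = (i : ℕ) + 1 →
      |f (Sum.inr (Sum.inl i)) - f (Sum.inr (Sum.inl j))| ≤ 1)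
    (h4 : ∀ h : 0 < t, |f (Sum.inl r) - f (Sum.inr (Sum.inr ⟨0, h⟩))| ≤ 1)
    (h5 : ∀ i j : Fin t, (j : ℕ) = (i : ℕ) + 1 →
      |f (Sum.inr (Sum.inr i)) - f (Sum.inr (Sum.inr j))| ≤ 1) :
    ∀ x y, (pathTree R r s t).Adj x y → |f x - f y| ≤ 1 := by
  have key : ∀ x y, (∃ a b : V, x = Sum.inl a ∧ y = Sum.inl b ∧ R.Adj a b) ∨
      (∃ h : 0 < s, x = Sum.inl r ∧ y = Sum.inr (Sum.inl ⟨0, h⟩)) ∨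
      (∃ i j : Fin s, x = Sum.inr (Sum.inl i) ∧ y = Sum.inr (Sum.inl j) ∧ (j : ℕ) = (i : ℕ) + 1) ∨
      (∃ h : 0 < t, x = Sum.inl r ∧ y = Sum.inr (Sum.inr ⟨0, h⟩)) ∨
      (∃ i j : Fin t, x = Sum.inr (Sum.inr i) ∧ y = Sum.inr (Sum.inr j) ∧ (j : ℕ) = (i : ℕ) + 1) →
      |f x - f y| ≤ 1 := by
    rintro x y (⟨a, c, rfl, rfl, h⟩ | ⟨h, rfl, rfl⟩ | ⟨i, j, rfl, rfl, h⟩ | ⟨h, rfl, rfl⟩ |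
      ⟨i, j, rfl, rfl, h⟩)
    · exact h1 a c h
    · exact h2 h
    · exact h3 i j h
    · exact h4 h
    · exact h5 i j h
  rintro x y ⟨-, h | h⟩
  · exact key x y h
  · rw [abs_sub_comm]; exact key y x h

lemma adj_dist_lip (hc : R.Connected) (a : V) {u w : V} (h : R.Adj u w) :
    |(R.dist a u : ℤ) - R.dist a w| ≤ 1 := by
  have l1 : R.dist a u ≤ R.dist a w + 1 :=
    le_trans (hc.dist_triangle (v := w)) (by
      have := R.dist_le h.symm.toWalk; simp at this; omega)
  have l2 : R.dist a w ≤ R.dist a u + 1 :=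
    le_trans (hc.dist_triangle (v := u)) (by
      have := R.dist_le h.toWalk; simp at this; omega)
  rw [abs_sub_le_iff]; constructor <;> push_cast <;> omega

/-- The potential measuring distance from `a`. -/
noncomputable def pot (R : SimpleGraph V) (r a : V) : V ⊕ (Fin s ⊕ Fin t) → ℤ
  | Sum.inl v => (R.dist a v : ℤ)
  | Sum.inr (Sum.inl i) => (R.dist a r : ℤ) + i.val + 1
  | Sum.inr (Sum.inr i) => (R.dist a r : ℤ) + i.val + 1

lemma pot_lip (hc : R.Connected) (a : V) :
    ∀ x y, (pathTree R r s t).Adj x y → |pot R r a x - pot R r a y| ≤ 1 := by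
  apply pt_lip
  · intro u w h; simpa [pot] using adj_dist_lip hc a h
  · intro h; simp [pot]
  · intro i j h; simp only [pot]; rw [abs_sub_le_iff]; omega
  · intro h; simp [pot]
  · intro i j h; simp only [pot]; rw [abs_sub_le_iff]; omega

/-- The potential separating the two chains. -/
def pot2 (s t : ℕ) : V ⊕ (Fin s ⊕ Fin t) → ℤ
  | Sum.inl _ => 0
  | Sum.inr (Sum.inl i) => -((i.val : ℤ) + 1)
  | Sum.inr (Sum.inr i) => (i.val : ℤ) + 1

lemma pot2_lip : ∀ x y, (pathTree R r s t).Adj x y → |pot2 s t x - pot2 s t y| ≤ 1 := by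
  apply pt_lip
  · intro a b _; simp [pot2]
  · intro h; simp [pot2]
  · intro i j h; simp only [pot2]; rw [abs_sub_le_iff]; omega
  · intro h; simp [pot2]
  · intro i j h; simp only [pot2]; rw [abs_sub_le_iff]; omega

end Lip

section Dist

variable {V : Type*} {R : SimpleGraph V} {r : V} {s t : ℕ}

lemma pt_dist_inl_inl (hc : R.Connected) (a c : V) :
    (pathTree R r s t).dist (Sum.inl a) (Sum.inl c) = R.dist a c := by
  obtain ⟨q, hq⟩ := hc.exists_walk_length_eq_dist a c
  have hub : (pathTree R r s t).dist (Sum.inl a) (Sum.inl c) ≤ R.dist a c := by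
    exact (SimpleGraph.dist_le (q.map (ptHom R r s t))).trans_eq
      (by rw [SimpleGraph.Walk.length_map, hq])
  have hreach : (pathTree R r s t).Reachable (Sum.inl a) (Sum.inl c) := ⟨q.map (ptHom R r s t)⟩
  have hlb := lipschitz_dist (pot R r a) (pot_lip hc a) hreach
  simp only [pot, SimpleGraph.dist_self, Nat.cast_zero, zero_sub, abs_neg, Int.abs_natCast]
    at hlb
  omega

lemma pt_dist_inl_v (hc : R.Connected) (a : V) (i : ℕ) (h : i < t) :
    (pathTree R r s t).dist (Sum.inl a) (Sum.inr (Sum.inr ⟨i, h⟩)) = R.dist a r + i + 1 := by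
  obtain ⟨q, hq⟩ := hc.exists_walk_length_eq_dist a r
  obtain ⟨p, hp⟩ := exists_vwalk (R := R) (r := r) (s := s) i h
  have hub : (pathTree R r s t).dist (Sum.inl a) (Sum.inr (Sum.inr ⟨i, h⟩))
      ≤ R.dist a r + i + 1 := by
    have := SimpleGraph.dist_le ((q.map (ptHom R r s t)).append p)
    rw [show ((q.map (ptHom R r s t)).append p).length = R.dist a r + (i + 1) from
      (SimpleGraph.Walk.length_append (q.map (ptHom R r s t)) p).trans
        (congrArg₂ (· + ·) ((SimpleGraph.Walk.length_map (ptHom R r s t) q).trans hq) hp)] at this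
    have h2 : (pathTree R r s t).dist (Sum.inl a) (Sum.inr (Sum.inr ⟨i, h⟩))
        ≤ R.dist a r + (i + 1) := this
    omega
  have hreach : (pathTree R r s t).Reachable (Sum.inl a) (Sum.inr (Sum.inr ⟨i, h⟩)) :=
    ⟨(q.map (ptHom R r s t)).append p⟩
  have hlb := lipschitz_dist (pot R r a) (pot_lip hc a) hreach
  simp only [pot, SimpleGraph.dist_self, Nat.cast_zero, zero_sub, abs_neg] at hlb
  rw [abs_of_nonneg (by positivity)] at hlb
  omega

lemma pt_dist_u0_v (h0 : 0 < s) (i : ℕ) (h : i < t) :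
    (pathTree R r s t).dist (Sum.inr (Sum.inl ⟨0, h0⟩)) (Sum.inr (Sum.inr ⟨i, h⟩))
      = i + 2 := by
  obtain ⟨p, hp⟩ := exists_vwalk (R := R) (r := r) (s := s) i h
  have hub : (pathTree R r s t).dist (Sum.inr (Sum.inl ⟨0, h0⟩)) (Sum.inr (Sum.inr ⟨i, h⟩))
      ≤ i + 2 := by
    have := SimpleGraph.dist_le
      (((pt_adj_u_start (R := R) (r := r) (t := t) h0).toWalk.reverse).append p)
    simp only [SimpleGraph.Walk.length_append, SimpleGraph.Walk.length_reverse] at this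
    simp at this
    omega
  have hreach : (pathTree R r s t).Reachable (Sum.inr (Sum.inl ⟨0, h0⟩))
      (Sum.inr (Sum.inr ⟨i, h⟩)) :=
    ⟨((pt_adj_u_start (R := R) (r := r) (t := t) h0).toWalk.reverse).append p⟩
  have hlb := lipschitz_dist (pot2 s t) pot2_lip hreach
  simp only [pot2] at hlb
  rw [abs_of_nonpos (by push_cast; omega)] at hlb
  omega

end Dist


lemma mem_pendentFinset {W : Type*} [Fintype W] (G : SimpleGraph W) (x : W)
    [I : Fintype (G.neighborSet x)] : x ∈ pendentFinset G ↔ G.degree x = 1 := by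
  simp only [pendentFinset, Finset.mem_filter, Finset.mem_univ, true_and]
  congr!

lemma deg_one {W : Type*} (G : SimpleGraph W) (x y : W) [DecidableEq W]
    [Fintype (G.neighborSet x)] (h : ∀ z, G.Adj x z ↔ z = y) : G.degree x = 1 := by
  have hn : G.neighborFinset x = {y} := by
    ext z; simp [SimpleGraph.mem_neighborFinset, h]
  rw [SimpleGraph.degree, hn, Finset.card_singleton]

lemma two_le_deg {W : Type*} (G : SimpleGraph W) (x y z : W) [DecidableEq W]
    [Fintype (G.neighborSet x)] (hyz : y ≠ z) (hy : G.Adj x y) (hz : G.Adj x z) :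
    2 ≤ G.degree x := by
  have hsub : {y, z} ⊆ G.neighborFinset x := by
    intro w hw
    simp only [Finset.mem_insert, Finset.mem_singleton] at hw
    rcases hw with rfl | rfl <;> simp [SimpleGraph.mem_neighborFinset, hy, hz]
  calc 2 = ({y, z} : Finset W).card := (Finset.card_pair hyz).symm
    _ ≤ _ := Finset.card_le_card hsub

section Adj2
variable {V : Type*} {R : SimpleGraph V} {r : V} {s t : ℕ}


lemma adj_inl_iff {a : V} (ha : a ≠ r) (z : V ⊕ (Fin s ⊕ Fin t)) :
    (pathTree R r s t).Adj (Sum.inl a) z ↔ ∃ b, z = Sum.inl b ∧ R.Adj a b := by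
  simp only [pathTree, SimpleGraph.fromRel_adj]
  constructor
  · rintro ⟨hne, h | h⟩ <;>
      rcases h with ⟨a',b',h1,h2,h3⟩|⟨h,h1,h2⟩|⟨i,j,h1,h2,h3⟩|⟨h,h1,h2⟩|⟨i,j,h1,h2,h3⟩ <;>
      simp_all [eq_comm] <;> exact h3.symm
  · rintro ⟨b, rfl, h⟩
    exact ⟨by simp [h.ne], Or.inl (Or.inl ⟨a, b, rfl, rfl, h⟩)⟩

lemma adj_v_iff (i : Fin t) (z : V ⊕ (Fin s ⊕ Fin t)) :
    (pathTree R r s t).Adj (Sum.inr (Sum.inr i)) z ↔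
      ((i : ℕ) = 0 ∧ z = Sum.inl r) ∨
      (∃ j : Fin t, (i : ℕ) = (j : ℕ) + 1 ∧ z = Sum.inr (Sum.inr j)) ∨
      (∃ j : Fin t, (j : ℕ) = (i : ℕ) + 1 ∧ z = Sum.inr (Sum.inr j)) := by
  simp only [pathTree, SimpleGraph.fromRel_adj]
  constructor
  · rintro ⟨hne, h | h⟩ <;>
      rcases h with ⟨a',b',h1,h2,h3⟩|⟨h,h1,h2⟩|⟨i',j,h1,h2,h3⟩|⟨h,h1,h2⟩|⟨i',j,h1,h2,h3⟩ <;>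
      simp_all
  · rintro (⟨h0, rfl⟩ | ⟨j, hj, rfl⟩ | ⟨j, hj, rfl⟩)
    · have ht : 0 < t := i.pos
      refine ⟨by simp, Or.inr (Or.inr (Or.inr (Or.inr (Or.inl ⟨ht, rfl, by
        rw [show i = (⟨0, ht⟩ : Fin t) from Fin.ext h0]⟩))))⟩
    · exact ⟨by simp [Fin.ext_iff]; omega,
        Or.inr (Or.inr (Or.inr (Or.inr (Or.inr ⟨j, i, rfl, rfl, hj⟩))))⟩
    · exact ⟨by simp [Fin.ext_iff]; omega,
        Or.inl (Or.inr (Or.inr (Or.inr (Or.inr ⟨i, j, rfl, rfl, hj⟩))))⟩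

lemma adj_u0_iff (i : Fin 1) (z : V ⊕ (Fin 1 ⊕ Fin t)) :
    (pathTree R r 1 t).Adj (Sum.inr (Sum.inl i)) z ↔ z = Sum.inl r := by
  simp only [pathTree, SimpleGraph.fromRel_adj]
  constructor
  · rintro ⟨hne, h | h⟩ <;>
      rcases h with ⟨a',b',h1,h2,h3⟩|⟨h,h1,h2⟩|⟨i',j,h1,h2,h3⟩|⟨h,h1,h2⟩|⟨i',j,h1,h2,h3⟩ <;>
      simp_all <;> omega
  · rintro rfl
    exact ⟨by simp, Or.inr (Or.inr (Or.inl ⟨one_pos, rfl,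
      by rw [Subsingleton.elim i (⟨0, one_pos⟩ : Fin 1)]⟩))⟩

end Adj2

section Pendent

variable {V : Type*} [Fintype V] {R : SimpleGraph V} [DecidableRel R.Adj] {r : V} {s t : ℕ}

lemma mem_pendent_inl (hdeg : 2 ≤ R.degree r) (a : V) :
    (Sum.inl a ∈ pendentFinset (pathTree R r s t)) ↔ a ∈ pendentFinset R := by
  classical
  rw [mem_pendentFinset, mem_pendentFinset]
  by_cases ha : a = r
  · rw [ha]
    have h2 : 2 ≤ (pathTree R r s t).degree (Sum.inl r) := by
      obtain ⟨y, hy, z, hz, hyz⟩ := Finset.one_lt_card.mp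
        (show 1 < (R.neighborFinset r).card from hdeg)
      exact two_le_deg _ _ (Sum.inl y) (Sum.inl z) (by simp [hyz])
        (pt_adj_inl_inl ((SimpleGraph.mem_neighborFinset R r y).mp hy))
        (pt_adj_inl_inl ((SimpleGraph.mem_neighborFinset R r z).mp hz))
    constructor <;> intro h <;> omega
  · have hn : (pathTree R r s t).neighborFinset (Sum.inl a)
        = (R.neighborFinset a).map ⟨Sum.inl, Sum.inl_injective⟩ := by
      ext z
      simp only [SimpleGraph.mem_neighborFinset, adj_inl_iff ha, Finset.mem_map,
        Function.Embedding.coeFn_mk]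
      constructor
      · rintro ⟨b, rfl, hb⟩; exact ⟨b, by simp [hb], rfl⟩
      · rintro ⟨b, hb, rfl⟩; exact ⟨b, rfl, by simpa using hb⟩
    have : (pathTree R r s t).degree (Sum.inl a) = R.degree a := by
      rw [SimpleGraph.degree, hn, Finset.card_map]; rfl
    rw [this]

lemma mem_pendent_u (i : Fin 1) :
    Sum.inr (Sum.inl i) ∈ pendentFinset (pathTree R r 1 t) := by
  classical
  rw [mem_pendentFinset]
  exact deg_one _ _ (Sum.inl r) (adj_u0_iff i)

lemma mem_pendent_v (ht : 2 ≤ t) (i : Fin t) :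
    (Sum.inr (Sum.inr i) ∈ pendentFinset (pathTree R r s t)) ↔ (i : ℕ) = t - 1 := by
  classical
  rw [mem_pendentFinset]
  by_cases hlast : (i : ℕ) = t - 1
  · have hkey : ∀ z, (pathTree R r s t).Adj (Sum.inr (Sum.inr i)) z
        ↔ z = Sum.inr (Sum.inr (⟨t - 2, by omega⟩ : Fin t)) := by
      intro z
      rw [adj_v_iff]
      constructor
      · rintro (⟨h0, rfl⟩ | ⟨j, hj, rfl⟩ | ⟨j, hj, rfl⟩)
        · omega
        · congr 2; exact Fin.ext (show (j : ℕ) = t - 2 by omega)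
        · exact absurd j.isLt (by omega)
      · rintro rfl
        exact Or.inr (Or.inl ⟨⟨t - 2, by omega⟩, by show (i : ℕ) = t - 2 + 1; omega, rfl⟩)
    simp [deg_one _ _ _ hkey, hlast]
  · have hnext : (pathTree R r s t).Adj (Sum.inr (Sum.inr i))
        (Sum.inr (Sum.inr (⟨(i : ℕ) + 1, by omega⟩ : Fin t))) := pt_adj_v_chain rfl
    have h2 : 2 ≤ (pathTree R r s t).degree (Sum.inr (Sum.inr i)) := by
      by_cases h0 : (i : ℕ) = 0
      · refine two_le_deg _ _ (Sum.inl r) _ (by simp) ?_ hnext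
        have : i = (⟨0, by omega⟩ : Fin t) := Fin.ext h0
        rw [this]
        exact (pt_adj_v_start (by omega)).symm
      · refine two_le_deg _ _ (Sum.inr (Sum.inr (⟨(i : ℕ) - 1, by omega⟩ : Fin t))) _
          (by simp only [ne_eq, Sum.inr.injEq, Fin.mk.injEq]; omega) ?_ hnext
        exact (pt_adj_v_chain (show (i : ℕ) = (i : ℕ) - 1 + 1 by omega)).symm
    constructor <;> intro h <;> omega

end Pendent

section PendentSet

variable {V : Type*} [Fintype V] [DecidableEq V] {R : SimpleGraph V} [DecidableRel R.Adj]
  {r : V}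

lemma pendent_G0 (hdeg : 2 ≤ R.degree r) {t : ℕ} (ht : 2 ≤ t) :
    pendentFinset (pathTree R r 0 t) =
      insert (Sum.inr (Sum.inr (⟨t - 1, by omega⟩ : Fin t)) : V ⊕ (Fin 0 ⊕ Fin t))
        ((pendentFinset R).map ⟨Sum.inl, Sum.inl_injective⟩) := by
  ext x
  rcases x with a | (i | i)
  · rw [mem_pendent_inl hdeg]
    simp
  · exact i.elim0
  · rw [mem_pendent_v ht]
    constructor
    · intro h
      have hi : i = (⟨t - 1, by omega⟩ : Fin t) := Fin.ext h
      rw [hi]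
      exact Finset.mem_insert_self _ _
    · intro h
      rcases Finset.mem_insert.mp h with h | h
      · simp only [Sum.inr.injEq] at h
        rw [h]
      · simp at h

lemma pendent_G1 (hdeg : 2 ≤ R.degree r) {t : ℕ} (ht : 2 ≤ t) :
    pendentFinset (pathTree R r 1 t) =
      insert (Sum.inr (Sum.inl (⟨0, one_pos⟩ : Fin 1)) : V ⊕ (Fin 1 ⊕ Fin t))
        (insert (Sum.inr (Sum.inr (⟨t - 1, by omega⟩ : Fin t)) : V ⊕ (Fin 1 ⊕ Fin t))
          ((pendentFinset R).map ⟨Sum.inl, Sum.inl_injective⟩)) := by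
  ext x
  rcases x with a | (i | i)
  · rw [mem_pendent_inl hdeg]
    simp
  · have h1 : i = (⟨0, one_pos⟩ : Fin 1) := Subsingleton.elim _ _
    subst h1
    simp only [Finset.mem_insert, Sum.inr.injEq, true_or, iff_true, Fin.isValue]
    exact mem_pendent_u _
  · rw [mem_pendent_v ht]
    constructor
    · intro h
      have hi : i = (⟨t - 1, by omega⟩ : Fin t) := Fin.ext h
      rw [hi]
      exact Finset.mem_insert_of_mem (Finset.mem_insert_self _ _)
    · intro h
      rcases Finset.mem_insert.mp h with h | h
      · exact absurd h (by simp)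
      · rcases Finset.mem_insert.mp h with h | h
        · simp only [Sum.inr.injEq] at h
          rw [h]
        · simp at h

end PendentSet

section DistU

variable {V : Type*} {R : SimpleGraph V} {r : V} {s t : ℕ}

lemma pt_dist_inl_u0 (hc : R.Connected) (a : V) (h0 : 0 < s) :
    (pathTree R r s t).dist (Sum.inl a) (Sum.inr (Sum.inl ⟨0, h0⟩)) = R.dist a r + 1 := by
  obtain ⟨q, hq⟩ := hc.exists_walk_length_eq_dist a r
  have hub : (pathTree R r s t).dist (Sum.inl a) (Sum.inr (Sum.inl ⟨0, h0⟩))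
      ≤ R.dist a r + 1 := by
    have := SimpleGraph.dist_le
      ((q.map (ptHom R r s t)).append (pt_adj_u_start h0).toWalk)
    rw [show ((q.map (ptHom R r s t)).append
          (pt_adj_u_start (R := R) (r := r) (t := t) h0).toWalk).length
        = R.dist a r + (pt_adj_u_start (R := R) (r := r) (t := t) h0).toWalk.length from
      (SimpleGraph.Walk.length_append (q.map (ptHom R r s t))
          (pt_adj_u_start (R := R) (r := r) (t := t) h0).toWalk).trans
        (congrArg (· + _) ((SimpleGraph.Walk.length_map (ptHom R r s t) q).trans hq))] at this
    have h2 : (pathTree R r s t).dist (Sum.inl a) (Sum.inr (Sum.inl ⟨0, h0⟩))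
        ≤ R.dist a r + (pt_adj_u_start (R := R) h0).toWalk.length := this
    simpa using h2
  have hreach : (pathTree R r s t).Reachable (Sum.inl a) (Sum.inr (Sum.inl ⟨0, h0⟩)) :=
    ⟨(q.map (ptHom R r s t)).append (pt_adj_u_start h0).toWalk⟩
  have hlb := lipschitz_dist (pot R r a) (pot_lip hc a) hreach
  simp only [pot, SimpleGraph.dist_self, Nat.cast_zero, zero_sub, abs_neg] at hlb
  rw [abs_of_nonneg (by positivity)] at hlb
  omega

end DistU

section OS

variable {V : Type*} [Fintype V] [DecidableEq V] {R : SimpleGraph V} [DecidableRel R.Adj]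
  {r : V}

lemma OS0_eq (hc : R.Connected) {b : ℕ} (hb : 1 < b) {pf : b < b + 1} :
    ∑ u ∈ insert (Sum.inr (Sum.inr (⟨b, pf⟩ : Fin (b + 1))) : V ⊕ (Fin 0 ⊕ Fin (b + 1)))
        ((pendentFinset R).map ⟨Sum.inl, Sum.inl_injective⟩),
      ∑ v ∈ insert (Sum.inr (Sum.inr (⟨b, pf⟩ : Fin (b + 1))) : V ⊕ (Fin 0 ⊕ Fin (b + 1)))
        ((pendentFinset R).map ⟨Sum.inl, Sum.inl_injective⟩),
        (pathTree R r 0 (b + 1)).dist u v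
    = (∑ p ∈ pendentFinset R, ∑ q ∈ pendentFinset R, R.dist p q)
        + 2 * (∑ p ∈ pendentFinset R, R.dist p r)
        + 2 * (pendentFinset R).card * (b + 1) := by
  classical
  set w0 : V ⊕ (Fin 0 ⊕ Fin (b + 1)) := Sum.inr (Sum.inr (⟨b, pf⟩ : Fin (b + 1))) with hw0
  have hnot : w0 ∉ (pendentFinset R).map ⟨Sum.inl, Sum.inl_injective⟩ := by simp [hw0]
  have d1 : ∀ p q : V, (pathTree R r 0 (b + 1)).dist (Sum.inl p) (Sum.inl q) = R.dist p q :=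
    pt_dist_inl_inl hc
  have d2 : ∀ p : V, (pathTree R r 0 (b + 1)).dist (Sum.inl p) w0 = R.dist p r + (b + 1) := by
    intro p
    rw [hw0, pt_dist_inl_v hc]
    omega
  have d3 : ∀ p : V, (pathTree R r 0 (b + 1)).dist w0 (Sum.inl p) = R.dist p r + (b + 1) := by
    intro p; rw [SimpleGraph.dist_comm]; exact d2 p
  simp only [Finset.sum_insert hnot, Finset.sum_map, Function.Embedding.coeFn_mk,
    SimpleGraph.dist_self, d1, d2, d3, Finset.sum_add_distrib, Finset.sum_const, smul_eq_mul]
  ring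

lemma OS1_eq (hc : R.Connected) {b : ℕ} (hb : 1 < b) {pf : b - 1 < b} {pf0 : (0:ℕ) < 1} :
    ∑ u ∈ insert (Sum.inr (Sum.inl (⟨0, pf0⟩ : Fin 1)) : V ⊕ (Fin 1 ⊕ Fin b))
        (insert (Sum.inr (Sum.inr (⟨b - 1, pf⟩ : Fin b)) : V ⊕ (Fin 1 ⊕ Fin b))
          ((pendentFinset R).map ⟨Sum.inl, Sum.inl_injective⟩)),
      ∑ v ∈ insert (Sum.inr (Sum.inl (⟨0, pf0⟩ : Fin 1)) : V ⊕ (Fin 1 ⊕ Fin b))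
        (insert (Sum.inr (Sum.inr (⟨b - 1, pf⟩ : Fin b)) : V ⊕ (Fin 1 ⊕ Fin b))
          ((pendentFinset R).map ⟨Sum.inl, Sum.inl_injective⟩)),
        (pathTree R r 1 b).dist u v
    = (∑ p ∈ pendentFinset R, ∑ q ∈ pendentFinset R, R.dist p q)
        + 2 * (∑ p ∈ pendentFinset R, R.dist p r)
        + 2 * (pendentFinset R).card * (b + 1)
        + (2 * (∑ p ∈ pendentFinset R, R.dist p r) + 2 * (b + 1)) := by
  classical
  set u0 : V ⊕ (Fin 1 ⊕ Fin b) := Sum.inr (Sum.inl (⟨0, pf0⟩ : Fin 1)) with hu0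
  set v1 : V ⊕ (Fin 1 ⊕ Fin b) := Sum.inr (Sum.inr (⟨b - 1, pf⟩ : Fin b)) with hv1
  have hnot1 : u0 ∉ insert v1 ((pendentFinset R).map ⟨Sum.inl, Sum.inl_injective⟩) := by
    simp [hu0, hv1]
  have hnot2 : v1 ∉ (pendentFinset R).map ⟨Sum.inl, Sum.inl_injective⟩ := by simp [hv1]
  have d1 : ∀ p q : V, (pathTree R r 1 b).dist (Sum.inl p) (Sum.inl q) = R.dist p q :=
    pt_dist_inl_inl hc
  have d2 : ∀ p : V, (pathTree R r 1 b).dist (Sum.inl p) v1 = R.dist p r + b := by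
    intro p; rw [hv1, pt_dist_inl_v hc]; omega
  have d3 : ∀ p : V, (pathTree R r 1 b).dist v1 (Sum.inl p) = R.dist p r + b := by
    intro p; rw [SimpleGraph.dist_comm]; exact d2 p
  have d4 : ∀ p : V, (pathTree R r 1 b).dist (Sum.inl p) u0 = R.dist p r + 1 := by
    intro p; rw [hu0]; exact pt_dist_inl_u0 hc p pf0
  have d5 : ∀ p : V, (pathTree R r 1 b).dist u0 (Sum.inl p) = R.dist p r + 1 := by
    intro p; rw [SimpleGraph.dist_comm]; exact d4 p
  have d6 : (pathTree R r 1 b).dist u0 v1 = b + 1 := by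
    rw [hu0, hv1, pt_dist_u0_v]; omega
  have d7 : (pathTree R r 1 b).dist v1 u0 = b + 1 := by rw [SimpleGraph.dist_comm]; exact d6
  simp only [Finset.sum_insert hnot1, Finset.sum_insert hnot2, Finset.sum_map,
    Function.Embedding.coeFn_mk, SimpleGraph.dist_self, d1, d2, d3, d4, d5, d6, d7,
    Finset.sum_add_distrib, Finset.sum_const, smul_eq_mul]
  ring

end OS

/-- Let `R` be a tree on at least two vertices whose root `r` has degree at least `2`, and let
`b > 1`. Then `TW(T_{1,b}) > TW(T_{0,b+1})`. -/
theorem terminal_wiener_index_pathTree_gt {V : Type*} [Fintype V] (R : SimpleGraph V)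
    [DecidableRel R.Adj] (r : V) (hR : R.IsTree) (hcard : 2 ≤ Fintype.card V)
    (hdeg : 2 ≤ R.degree r) (b : ℕ) (hb : 1 < b) :
    terminalWienerIndex (pathTree R r 1 b) > terminalWienerIndex (pathTree R r 0 (b + 1)) := by
  classical
  have hc := hR.isConnected
  rw [terminalWienerIndex, terminalWienerIndex,
    pendent_G1 hdeg (t := b) (by omega), pendent_G0 hdeg (t := b + 1) (by omega)]
  have h0 : b + 1 - 1 = b := by omega
  rw [show ((⟨b + 1 - 1, by omega⟩ : Fin (b + 1))) = (⟨b, by omega⟩ : Fin (b + 1)) from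
    Fin.ext h0]
  rw [OS0_eq hc hb, OS1_eq hc hb]
  set X := (∑ p ∈ pendentFinset R, ∑ q ∈ pendentFinset R, R.dist p q)
      + 2 * (∑ p ∈ pendentFinset R, R.dist p r)
      + 2 * (pendentFinset R).card * (b + 1) with hX
  have : X + (2 * (∑ p ∈ pendentFinset R, R.dist p r) + 2 * (b + 1))
      = X + ((∑ p ∈ pendentFinset R, R.dist p r) + (b + 1)) * 2 := by ring
  rw [this, Nat.add_mul_div_right _ _ (by norm_num : (0:ℕ) < 2)]
  omega
end
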